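/- arXiv:2603.25662 — 3 statements merged into one kernel-verified Lean document; each statement's English description precedes it below -/
import Mathlib

section
/- Every Θ-class of a daisy cube is peripheral: for every edge ab of a daisy cube G, either W_ab = U_ab or W_ba = U_ba, where W_ab = {w : d(w,a) < d(w,b)}, and U_ab is the set of vertices of W_ab adjacent to some vertex of W_ba. -/
open SimpleGraph Function

/-- The hypercube graph `Q_n` on binary strings of length `n`. -/
def cubeGraph (n : ℕ) : SimpleGraph (Fin n → Bool) where
  Adj u v := hammingDist u v = 1
  symm := ⟨fun u v h => by simpa [hammingDist_comm] using h⟩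
  loopless := ⟨fun u h => by simp [hammingDist_self] at h⟩

/-- The downward closure of a set of binary strings under the coordinatewise order. -/
def dClosure {n : ℕ} (X : Set (Fin n → Bool)) : Set (Fin n → Bool) :=
  {u | ∃ x ∈ X, u ≤ x}

/-- The daisy cube `Q_n(X)`: the subgraph of `Q_n` induced by the downward closure of `X`. -/
def daisyCube (n : ℕ) (X : Set (Fin n → Bool)) : SimpleGraph (dClosure X) :=
  (cubeGraph n).induce (dClosure X)

/-- The τ-graph of a (coordinatized) partial cube `G ⊆ Q_n`, with Θ-classes identified with the
coordinates: two classes are adjacent iff incident edges, one flipping each coordinate, form a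
convex path on three vertices. -/
def coordTau {n : ℕ} {V : Type*} (val : V → (Fin n → Bool)) (G : SimpleGraph V) :
    SimpleGraph (Fin n) where
  Adj i j := i ≠ j ∧ ∃ u v w : V, G.Adj u v ∧ G.Adj v w ∧
      val u i ≠ val v i ∧ val v j ≠ val w j ∧
      ¬ G.Adj u w ∧ ∀ x : V, G.Adj u x → G.Adj w x → x = v
  symm := by
    constructor
    rintro i j ⟨hij, u, v, w, h1, h2, h3, h4, h5, h6⟩
    exact ⟨hij.symm, w, v, u, h2.symm, h1.symm, fun h => h4 h.symm, fun h => h3 h.symm,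
      fun h => h5 h.symm, fun x hw hu => h6 x hu hw⟩
  loopless := by
    constructor
    rintro i ⟨hij, _⟩
    exact hij rfl

/-- The set `W_ab` of vertices closer to `a` than to `b`. -/
def Wset {V : Type*} (G : SimpleGraph V) (a b : V) : Set V :=
  {w | G.dist w a < G.dist w b}

/-- The set `U_ab` of vertices of `W_ab` adjacent to some vertex of `W_ba`. -/
def Uset {V : Type*} (G : SimpleGraph V) (a b : V) : Set V :=
  {u | u ∈ Wset G a b ∧ ∃ v ∈ Wset G b a, G.Adj u v}

variable {n : ℕ}

lemma hd_update (u : Fin n → Bool) (i : Fin n) (c : Bool) (h : u i ≠ c) :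
    hammingDist u (Function.update u i c) = 1 := by
  unfold hammingDist
  rw [Finset.card_eq_one]
  refine ⟨i, ?_⟩
  ext j
  by_cases hj : j = i <;> simp [Function.update_apply, hj, h, Ne.symm]

lemma hd_step (u v : Fin n → Bool) (i : Fin n) (h : u i ≠ v i) :
    hammingDist (Function.update u i (v i)) v + 1 = hammingDist u v := by
  unfold hammingDist
  have he : (Finset.univ.filter fun j => Function.update u i (v i) j ≠ v j)
      = (Finset.univ.filter fun j => u j ≠ v j).erase i := by
    ext j
    by_cases hj : j = i <;> simp [Function.update_apply, hj]
  rw [he, Finset.card_erase_add_one (by simp [h])]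

lemma hd_insert (a b w : Fin n → Bool) (i : Fin n) (hi : a i ≠ b i)
    (hj : ∀ j, j ≠ i → a j = b j) (hw : w i = a i) :
    hammingDist w b = hammingDist w a + 1 := by
  unfold hammingDist
  have he : (Finset.univ.filter fun j => w j ≠ b j)
      = insert i (Finset.univ.filter fun j => w j ≠ a j) := by
    ext j
    by_cases hji : j = i
    · subst hji; simp [hw, hi]
    · simp [hji, hj j hji]
  rw [he, Finset.card_insert_of_notMem (by simp [hw])]

lemma exists_unique_diff (a b : Fin n → Bool) (h : hammingDist a b = 1) :
    ∃ i, a i ≠ b i ∧ ∀ j, j ≠ i → a j = b j := by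
  unfold hammingDist at h
  rw [Finset.card_eq_one] at h
  obtain ⟨i, hi⟩ := h
  have hmem : ∀ j, (a j ≠ b j) ↔ j = i := by
    intro j
    have := Finset.ext_iff.mp hi j
    simpa using this
  exact ⟨i, (hmem i).mpr rfl, fun j hji => by
    by_contra hc; exact hji ((hmem j).mp hc)⟩


variable {n : ℕ} {X : Set (Fin n → Bool)}

lemma mem_dClosure_of_le {u v : Fin n → Bool} (h : u ≤ v) (hv : v ∈ dClosure X) :
    u ∈ dClosure X := by
  obtain ⟨x, hx, hvx⟩ := hv
  exact ⟨x, hx, le_trans h hvx⟩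

lemma daisy_adj_iff (u v : dClosure X) :
    (daisyCube n X).Adj u v ↔ hammingDist u.val v.val = 1 := Iff.rfl

lemma hd_le_walk {u v : dClosure X} (p : (daisyCube n X).Walk u v) :
    hammingDist u.val v.val ≤ p.length := by
  induction p with
  | nil => simp
  | @cons a c d hadj q ih =>
    have h1 : hammingDist a.val c.val = 1 := hadj
    have := hammingDist_triangle a.val c.val d.val
    simp only [SimpleGraph.Walk.length_cons]
    omega

lemma exists_walk_hd :
    ∀ (k : ℕ) (u v : dClosure X), hammingDist u.val v.val ≤ k →
      ∃ p : (daisyCube n X).Walk u v, p.length = hammingDist u.val v.val := by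
  intro k
  induction k with
  | zero =>
    intro u v h
    have he : u.val = v.val := hammingDist_eq_zero.mp (Nat.le_zero.mp h)
    have : u = v := Subtype.ext he
    subst this
    exact ⟨SimpleGraph.Walk.nil, by simp⟩
  | succ k ih =>
    intro u v h
    by_cases he : u.val = v.val
    · have : u = v := Subtype.ext he
      subst this
      exact ⟨SimpleGraph.Walk.nil, by simp⟩
    · -- find a coordinate to flip keeping us in the closure
      have key : ∃ i, u.val i ≠ v.val i ∧ Function.update u.val i (v.val i) ∈ dClosure X := by
        by_cases hcase : ∃ i, u.val i = true ∧ v.val i = false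
        · obtain ⟨i, hui, hvi⟩ := hcase
          refine ⟨i, by simp [hui, hvi], ?_⟩
          refine mem_dClosure_of_le (v := u.val) (fun j => ?_) u.2
          by_cases hj : j = i
          · subst hj; simp [hui, hvi]
          · simp [Function.update_apply, hj]
        · push_neg at hcase
          have hle : u.val ≤ v.val := by
            intro j
            cases hu : u.val j with
            | false => simp
            | true => simp [hcase j hu]
          obtain ⟨i, hi⟩ : ∃ i, u.val i ≠ v.val i := by
            by_contra hc
            push_neg at hc
            exact he (funext hc)
          refine ⟨i, hi, ?_⟩
          refine mem_dClosure_of_le (v := v.val) (fun j => ?_) v.2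
          by_cases hj : j = i
          · subst hj; simp
          · simp only [Function.update_apply, if_neg hj]; exact hle j
      obtain ⟨i, hne, hmem⟩ := key
      set u' : dClosure X := ⟨Function.update u.val i (v.val i), hmem⟩ with hu'
      have hadj : (daisyCube n X).Adj u u' := hd_update u.val i (v.val i) hne
      have hstep := hd_step u.val v.val i hne
      have hle' : hammingDist u'.val v.val ≤ k := by
        have : hammingDist u'.val v.val + 1 = hammingDist u.val v.val := hstep
        omega
      obtain ⟨p, hp⟩ := ih u' v hle'
      exact ⟨SimpleGraph.Walk.cons hadj p, by simp [SimpleGraph.Walk.length_cons, hp]; omega⟩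

lemma daisy_dist_eq (u v : dClosure X) :
    (daisyCube n X).dist u v = hammingDist u.val v.val := by
  obtain ⟨p, hp⟩ := exists_walk_hd (hammingDist u.val v.val) u v le_rfl
  refine le_antisymm (hp ▸ SimpleGraph.dist_le p) ?_
  obtain ⟨q, hq⟩ := SimpleGraph.Reachable.exists_walk_length_eq_dist ⟨p⟩
  calc hammingDist u.val v.val ≤ q.length := hd_le_walk q
    _ = _ := hq


lemma peripheral_of_true {n : ℕ} {X : Set (Fin n → Bool)} (a b : dClosure X) (i : Fin n)
    (hi : a.val i ≠ b.val i) (hj : ∀ j, j ≠ i → a.val j = b.val j)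
    (hbi : b.val i = true) :
    Wset (daisyCube n X) b a = Uset (daisyCube n X) b a := by
  refine Set.Subset.antisymm ?_ (fun w hw => hw.1)
  intro w hw
  have hw' : hammingDist w.val b.val < hammingDist w.val a.val := by
    have h1 := daisy_dist_eq w b
    have h2 := daisy_dist_eq w a
    have := hw
    simp only [Wset, Set.mem_setOf_eq] at this
    omega
  have hwi : w.val i = b.val i := by
    by_contra hc
    have hwa : w.val i = a.val i := by
      revert hi hc; cases a.val i <;> cases b.val i <;> cases w.val i <;> simp
    have := hd_insert a.val b.val w.val i hi hj hwa
    omega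
  have hne : w.val i ≠ false := by rw [hwi, hbi]; simp
  have hmem : Function.update w.val i false ∈ dClosure X := by
    refine mem_dClosure_of_le (v := w.val) (fun j => ?_) w.2
    by_cases hj' : j = i
    · subst hj'; simp
    · simp [Function.update_apply, hj']
  set w' : dClosure X := ⟨Function.update w.val i false, hmem⟩ with hw'def
  have hadj : (daisyCube n X).Adj w w' := hd_update w.val i false hne
  have hai : a.val i = false := by
    revert hi; rw [hbi]; cases a.val i <;> simp
  have hw'i : w'.val i = a.val i := by simp [hw'def, hai]
  have hlt : hammingDist w'.val a.val < hammingDist w'.val b.val := by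
    have := hd_insert a.val b.val w'.val i hi hj hw'i
    rw [hammingDist_comm w'.val a.val, hammingDist_comm w'.val b.val] at *
    omega
  refine ⟨hw, w', ?_, hadj⟩
  simp only [Wset, Set.mem_setOf_eq, daisy_dist_eq]
  exact hlt


/-- Every Θ-class of a daisy cube is peripheral: for every edge `ab` of a daisy
cube `G`, either `W_ab = U_ab` or `W_ba = U_ba`. -/
theorem daisyCube_theta_class_peripheral (n : ℕ) (X : Set (Fin n → Bool))
    (a b : dClosure X) (hab : (daisyCube n X).Adj a b) :
    Wset (daisyCube n X) a b = Uset (daisyCube n X) a b ∨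
      Wset (daisyCube n X) b a = Uset (daisyCube n X) b a := by
  have hab' : hammingDist a.val b.val = 1 := hab
  obtain ⟨i, hi, hj⟩ := exists_unique_diff a.val b.val hab'
  cases hbi : b.val i with
  | true => exact Or.inr (peripheral_of_true a b i hi hj hbi)
  | false =>
    have hai : a.val i = true := by revert hi; rw [hbi]; cases a.val i <;> simp
    exact Or.inl (peripheral_of_true b a i (Ne.symm hi) (fun j hji => (hj j hji).symm) hai)
end

section
/- The τ-graph of the Fibonacci cube Γ_n is the path P_n on n vertices, for every n ≥ 1. -/
open SimpleGraph Function

/-- Binary strings of length `n` with no two consecutive 1's. -/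
def fibSet (n : ℕ) : Set (Fin n → Bool) :=
  {u | ∀ i j : Fin n, (j : ℕ) = (i : ℕ) + 1 → ¬(u i = true ∧ u j = true)}

/-- The Fibonacci cube `Γ_n`. -/
def fibCube (n : ℕ) : SimpleGraph (fibSet n) :=
  (cubeGraph n).induce (fibSet n)

lemma hd_one {n : ℕ} {u v : Fin n → Bool} :
    hammingDist u v = 1 ↔ ∃ i, u i ≠ v i ∧ ∀ k, k ≠ i → u k = v k := by
  unfold hammingDist
  rw [Finset.card_eq_one]
  constructor
  · rintro ⟨a, ha⟩
    refine ⟨a, ?_, ?_⟩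
    · have h := ha ▸ Finset.mem_singleton_self a
      simpa using h
    · intro k hk
      by_contra h
      have hm : k ∈ Finset.univ.filter (fun k => u k ≠ v k) := by simpa using h
      rw [ha, Finset.mem_singleton] at hm
      exact hk hm
  · rintro ⟨i, hi, h⟩
    refine ⟨i, ?_⟩
    ext k
    simp only [Finset.mem_filter, Finset.mem_univ, true_and, Finset.mem_singleton]
    constructor
    · intro hk; by_contra hki; exact hk (h k hki)
    · rintro rfl; exact hi

lemma fib_adj {n : ℕ} {a b : fibSet n} :
    (fibCube n).Adj a b ↔ hammingDist a.val b.val = 1 := Iff.rfl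

lemma bnot_of_ne {x y : Bool} (h : x ≠ y) : x = !y := by
  cases x <;> cases y <;> simp_all

lemma tau_adj_of_succ {n : ℕ} {i j : Fin n} (hij : (i : ℕ) + 1 = (j : ℕ)) :
    (coordTau (Subtype.val) (fibCube n)).Adj i j := by
  have hne : i ≠ j := by intro e; subst e; omega
  set z : Fin n → Bool := fun _ => false with hz
  have hzmem : z ∈ fibSet n := by intro a b hab h; simp [hz] at h
  have hemem : ∀ m : Fin n, Function.update z m true ∈ fibSet n := by
    intro m a b hab ⟨ha, hb⟩
    have ha' : a = m := by
      by_contra h'; rw [Function.update_of_ne h'] at ha; simp [hz] at ha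
    have hb' : b = m := by
      by_contra h'; rw [Function.update_of_ne h'] at hb; simp [hz] at hb
    subst ha'; subst hb'; omega
  refine ⟨hne, ⟨_, hemem i⟩, ⟨z, hzmem⟩, ⟨_, hemem j⟩, ?_, ?_, ?_, ?_, ?_, ?_⟩
  · show hammingDist (Function.update z i true) z = 1
    rw [hd_one]
    exact ⟨i, by simp [hz], fun k hk => Function.update_of_ne hk _ _⟩
  · show hammingDist z (Function.update z j true) = 1
    rw [hd_one]
    exact ⟨j, by simp [hz], fun k hk => (Function.update_of_ne hk _ _).symm⟩
  · show Function.update z i true i ≠ z i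
    simp [hz]
  · show z j ≠ Function.update z j true j
    simp [hz]
  · intro hadj
    have hadj' : hammingDist (Function.update z i true) (Function.update z j true) = 1 := hadj
    rw [hd_one] at hadj'
    obtain ⟨m, hm, hk⟩ := hadj'
    have h1 : i = m := by
      by_contra h'
      have e := hk i h'
      rw [Function.update_self, Function.update_of_ne hne] at e
      simp [hz] at e
    have h2 : j = m := by
      by_contra h'
      have e := hk j h'
      rw [Function.update_self, Function.update_of_ne (Ne.symm hne)] at e
      simp [hz] at e
    exact hne (h1.trans h2.symm)
  · rintro ⟨x, hx⟩ hux hwx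
    have hux' : hammingDist (Function.update z i true) x = 1 := hux
    have hwx' : hammingDist (Function.update z j true) x = 1 := hwx
    rw [hd_one] at hux' hwx'
    obtain ⟨a, ha, hka⟩ := hux'
    obtain ⟨b, hb, hkb⟩ := hwx'
    have hi_ab : i = a ∨ i = b := by
      by_contra h'
      push_neg at h'
      have e1 := hka i h'.1
      have e2 := hkb i h'.2
      rw [Function.update_self] at e1
      rw [Function.update_of_ne hne] at e2
      simp [hz, ← e1] at e2
    have hj_ab : j = a ∨ j = b := by
      by_contra h'
      push_neg at h'
      have e1 := hka j h'.1
      have e2 := hkb j h'.2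
      rw [Function.update_self] at e2
      rw [Function.update_of_ne (Ne.symm hne)] at e1
      simp [hz, ← e1] at e2
    rcases hi_ab with hia | hib
    · -- i = a, so j = b, and x = z
      have hjb : j = b := by
        rcases hj_ab with h' | h'
        · exact absurd (hia.trans h'.symm) hne
        · exact h'
      rw [← hia] at ha hka
      rw [← hjb] at hb hkb
      refine Subtype.ext (funext fun k => ?_)
      show x k = z k
      by_cases hki : k = i
      · subst hki
        rw [Function.update_self] at ha
        cases hxk : x k
        · simp [hz]
        · exact (ha hxk.symm).elim
      · by_cases hkj : k = j
        · subst hkj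
          rw [Function.update_self] at hb
          cases hxk : x k
          · simp [hz]
          · exact (hb hxk.symm).elim
        · have e := hka k hki
          rw [Function.update_of_ne hki] at e
          exact e.symm
    · -- i = b, so j = a; x i = x j = true: contradiction
      have hja : j = a := by
        rcases hj_ab with h' | h'
        · exact h'
        · exact absurd (hib.trans h'.symm) hne
      rw [← hib] at hb hkb
      rw [← hja] at ha hka
      exfalso
      have hxi : x i = true := by
        rw [Function.update_of_ne hne] at hb
        cases hxk : x i
        · exact (hb (by simp [hz, hxk])).elim
        · rfl
      have hxj : x j = true := by
        rw [Function.update_of_ne (Ne.symm hne)] at ha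
        cases hxk : x j
        · exact (ha (by simp [hz, hxk])).elim
        · rfl
      exact hx i j hij.symm ⟨hxi, hxj⟩

/-- The τ-graph of the Fibonacci cube `Γ_n` is the path `P_n` on `n` vertices,
for every `n ≥ 1`. -/
theorem fibCube_tau_eq_path (n : ℕ) (hn : 1 ≤ n) :
    Nonempty (coordTau (Subtype.val) (fibCube n) ≃g SimpleGraph.pathGraph n) := by
  refine ⟨⟨Equiv.refl _, ?_⟩⟩
  intro i j
  simp only [Equiv.refl_apply, pathGraph_adj]
  constructor
  · rintro (h | h)
    · exact tau_adj_of_succ h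
    · exact (tau_adj_of_succ h).symm
  · rintro ⟨hij, u, v, w, h1, h2, h3, h4, h5, h6⟩
    rw [fib_adj, hd_one] at h1 h2
    obtain ⟨a, ha, hka⟩ := h1
    obtain ⟨b, hb, hkb⟩ := h2
    have hai : a = i := by
      by_contra h'; exact h3 (hka i (fun e => h' e.symm))
    have hbj : b = j := by
      by_contra h'; exact h4 (hkb j (fun e => h' e.symm))
    subst hai; subst hbj
    by_contra hcon
    push_neg at hcon
    obtain ⟨hc1, hc2⟩ := hcon
    -- the other potential common neighbor
    set v' : Fin n → Bool :=
      Function.update (Function.update v.val a (!v.val a)) b (!v.val b) with hv'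
    have hv'a : v' a = !v.val a := by
      rw [hv', Function.update_of_ne hij, Function.update_self]
    have hv'b : v' b = !v.val b := by
      rw [hv', Function.update_self]
    have hv'k : ∀ k, k ≠ a → k ≠ b → v' k = v.val k := by
      intro k hk1 hk2
      rw [hv', Function.update_of_ne hk2, Function.update_of_ne hk1]
    have hua : u.val a = !v.val a := bnot_of_ne ha
    have hwb : w.val b = !v.val b := bnot_of_ne (fun e => hb e.symm)
    -- v' ∈ fibSet
    have hv'mem : v' ∈ fibSet n := by
      intro p q hpq ⟨hp, hq⟩
      by_cases hpa : p = a
      · subst hpa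
        by_cases hqb : q = b
        · subst hqb; exact hc1 hpq.symm
        · have hqa : q ≠ p := by intro e; subst e; omega
          refine u.prop p q hpq ⟨?_, ?_⟩
          · rw [hua, ← hv'a]; exact hp
          · rw [hka q (fun e => hqa e), ← hv'k q hqa hqb]; exact hq
      · by_cases hpb : p = b
        · subst hpb
          by_cases hqa : q = a
          · subst hqa; exact hc2 hpq.symm
          · have hqb : q ≠ p := by intro e; subst e; omega
            refine w.prop p q hpq ⟨?_, ?_⟩
            · rw [hwb, ← hv'b]; exact hp
            · rw [← hkb q (fun e => hqb e), ← hv'k q hqa hqb]; exact hq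
        · by_cases hqa : q = a
          · subst hqa
            refine u.prop p q hpq ⟨?_, ?_⟩
            · rw [hka p hpa, ← hv'k p hpa hpb]; exact hp
            · rw [hua, ← hv'a]; exact hq
          · by_cases hqb : q = b
            · subst hqb
              refine w.prop p q hpq ⟨?_, ?_⟩
              · rw [← hkb p hpb, ← hv'k p hpa hpb]; exact hp
              · rw [hwb, ← hv'b]; exact hq
            · refine v.prop p q hpq ⟨?_, ?_⟩
              · rw [← hv'k p hpa hpb]; exact hp
              · rw [← hv'k q hqa hqb]; exact hq
    -- v' is a common neighbor of u and w
    have hadj_u : (fibCube n).Adj u ⟨v', hv'mem⟩ := by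
      rw [fib_adj, hd_one]
      refine ⟨b, ?_, ?_⟩
      · show u.val b ≠ v' b
        rw [hka b (fun e => hij e.symm), hv'b]
        simp
      · intro k hk
        show u.val k = v' k
        by_cases hka' : k = a
        · subst hka'; rw [hua, hv'a]
        · rw [hka k hka', hv'k k hka' hk]
    have hadj_w : (fibCube n).Adj w ⟨v', hv'mem⟩ := by
      rw [fib_adj, hd_one]
      refine ⟨a, ?_, ?_⟩
      · show w.val a ≠ v' a
        rw [← hkb a hij, hv'a]
        simp
      · intro k hk
        show w.val k = v' k
        by_cases hkb' : k = b
        · subst hkb'; rw [hwb, hv'b]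
        · rw [← hkb k hkb', hv'k k hk hkb']
    have := h6 ⟨v', hv'mem⟩ hadj_u hadj_w
    have hval : v' = v.val := congrArg Subtype.val this
    have : v' a = v.val a := by rw [hval]
    rw [hv'a] at this
    simp at this
end

section
/- In the Lucas cube Λ_n (n ≥ 3), for any index j with 3 ≤ j ≤ n−1, the Θ-classes X_1 and X_j are not adjacent in the τ-graph: every pair of incident edges, one from X_1 and one from X_j, lies on a common 4-cycle of Λ_n. -/
open SimpleGraph Function

/-- Binary strings of length `n` with no two cyclically consecutive 1's. -/
def lucasSet (n : ℕ) : Set (Fin n → Bool) :=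
  {u | ∀ i j : Fin n, ((i : ℕ) + 1) % n = (j : ℕ) → ¬(u i = true ∧ u j = true)}

/-- The Lucas cube `Λ_n`. -/
def lucasCube (n : ℕ) : SimpleGraph (lucasSet n) :=
  (cubeGraph n).induce (lucasSet n)

lemma ham_eq_of_ne {n : ℕ} {u v : Fin n → Bool} (h : hammingDist u v = 1)
    {a : Fin n} (ha : u a ≠ v a) {k : Fin n} (hk : k ≠ a) : u k = v k := by
  by_contra hne
  have hsub : ({a, k} : Finset (Fin n)) ⊆ Finset.univ.filter (fun i => u i ≠ v i) := by
    intro x hx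
    simp only [Finset.mem_insert, Finset.mem_singleton] at hx
    rcases hx with rfl | rfl <;> simp [Finset.mem_filter, ha, hne]
  have h2 : ({a, k} : Finset (Fin n)).card = 2 := Finset.card_pair (Ne.symm hk)
  have := Finset.card_le_card hsub
  rw [h2] at this
  unfold hammingDist at h
  omega

lemma ham_one {n : ℕ} {u v : Fin n → Bool} {a : Fin n} (ha : u a ≠ v a)
    (hk : ∀ k, k ≠ a → u k = v k) : hammingDist u v = 1 := by
  unfold hammingDist
  rw [Finset.card_eq_one]
  refine ⟨a, ?_⟩
  ext x
  simp only [Finset.mem_filter, Finset.mem_univ, true_and, Finset.mem_singleton]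
  constructor
  · intro hx; by_contra hxa; exact hx (hk x hxa)
  · rintro rfl; exact ha

/-- In the Lucas cube `Λ_n` (`n ≥ 3`), for any coordinate `j` with
`2 ≤ j ≤ n - 2` (i.e. `X_{j+1}` with `3 ≤ j+1 ≤ n-1` in 1-indexed notation), the Θ-classes
`X_1` (coordinate `0`) and `X_{j+1}` are not adjacent in the τ-graph: every pair of incident
edges, one flipping coordinate `0` and one flipping coordinate `j`, lies on a common 4-cycle. -/
theorem lucasCube_tau_not_adjacent (n : ℕ) (hn : 3 ≤ n) (i0 j : Fin n)
    (hi0 : (i0 : ℕ) = 0) (hj1 : 2 ≤ (j : ℕ)) (hj2 : (j : ℕ) ≤ n - 2) :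
    (∀ u v w : lucasSet n, (lucasCube n).Adj u v → (lucasCube n).Adj v w →
      u.1 i0 ≠ v.1 i0 → v.1 j ≠ w.1 j →
        ∃ x : lucasSet n, (lucasCube n).Adj w x ∧ (lucasCube n).Adj x u ∧ x ≠ v) ∧
    ¬ (coordTau (Subtype.val) (lucasCube n)).Adj i0 j := by
  have hji0 : j ≠ i0 := by
    intro h; rw [Fin.ext_iff, hi0] at h; omega
  have hi0j : i0 ≠ j := Ne.symm hji0
  have key : ∀ u v w : lucasSet n, (lucasCube n).Adj u v → (lucasCube n).Adj v w →
      u.1 i0 ≠ v.1 i0 → v.1 j ≠ w.1 j →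
        ∃ x : lucasSet n, (lucasCube n).Adj w x ∧ (lucasCube n).Adj x u ∧ x ≠ v := by
    intro u v w huv hvw hu0 hvj
    have huv' : hammingDist u.1 v.1 = 1 := huv
    have hvw' : hammingDist v.1 w.1 = 1 := hvw
    have huk : ∀ k : Fin n, k ≠ i0 → u.1 k = v.1 k := fun k hk => ham_eq_of_ne huv' hu0 hk
    have hvk : ∀ k : Fin n, k ≠ j → v.1 k = w.1 k := fun k hk => ham_eq_of_ne hvw' hvj hk
    set X : Fin n → Bool := fun k => if k = j then w.1 k else u.1 k with hX
    -- for k not in {j}, X k = u k; for k ≠ i0, j : X k = w k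
    have hXu : ∀ k : Fin n, k ≠ j → X k = u.1 k := by intro k hk; simp [hX, hk]
    have hXw : ∀ k : Fin n, k ≠ i0 → X k = w.1 k := by
      intro k hk
      by_cases hkj : k = j
      · simp [hX, hkj]
      · rw [hXu k hkj, huk k hk, hvk k hkj]
    have hXmem : X ∈ lucasSet n := by
      intro a b hab
      by_cases haj : a = j
      · have hbv : (b : ℕ) = (j : ℕ) + 1 := by
          rw [← hab, haj]; exact Nat.mod_eq_of_lt (by omega)
        have hbi : b ≠ i0 := by intro h; rw [h, hi0] at hbv; omega
        have hbj : b ≠ j := by intro h; rw [h] at hbv; omega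
        have hai : a ≠ i0 := by intro h; rw [haj] at h; exact hji0 h
        rw [hXw a hai, hXw b hbi]
        exact w.2 a b hab
      · by_cases hbj : b = j
        · have hbval : (b : ℕ) = (j : ℕ) := by rw [hbj]
          have hav : (a : ℕ) + 1 = (j : ℕ) := by
            rcases Nat.lt_or_ge ((a : ℕ) + 1) n with h | h
            · rw [Nat.mod_eq_of_lt h] at hab; omega
            · have han : (a : ℕ) + 1 = n := by have := a.isLt; omega
              rw [han, Nat.mod_self] at hab; omega
          have hai : a ≠ i0 := by intro h; rw [h, hi0] at hav; omega
          have hbi : b ≠ i0 := by rw [hbj]; exact hji0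
          rw [hXw a hai, hXw b hbi]
          exact w.2 a b hab
        · rw [hXu a haj, hXu b hbj]
          exact u.2 a b hab
    refine ⟨⟨X, hXmem⟩, ?_, ?_, ?_⟩
    · show hammingDist w.1 X = 1
      refine ham_one (a := i0) ?_ ?_
      · rw [hXu i0 hi0j, ← hvk i0 hi0j]
        exact fun h => hu0 h.symm
      · intro k hk; exact (hXw k hk).symm
    · show hammingDist X u.1 = 1
      refine ham_one (a := j) ?_ ?_
      · have hXj : X j = w.1 j := by simp [hX]
        rw [hXj, huk j hji0]
        exact fun h => hvj h.symm
      · exact hXu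
    · intro h
      have : X i0 = v.1 i0 := by rw [Subtype.ext_iff] at h; exact congrFun h i0
      rw [hXu i0 hi0j] at this
      exact hu0 this
  refine ⟨key, ?_⟩
  rintro ⟨hij, u, v, w, h1, h2, h3, h4, h5, h6⟩
  obtain ⟨x, hwx, hxu, hxv⟩ := key u v w h1 h2 h3 h4
  exact hxv (h6 x hxu.symm hwx)
end
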